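/- In the CMBS setting, the collection of all CMBSs at x₀ is a partition of {1,…,n}: distinct CMBSs at x₀ are disjoint, and every index i ∈ {1,…,n} belongs to some CMBS at x₀. -/

import Mathlib

set_option linter.unusedSectionVars false

open Matrix

/-- `P_S(x) = ∑_{i ∈ S} ĵ_i(x) ĵ_i(x)ᵀ`, the projector-valued function
associated with a subset `S` of the pointwise orthonormal frame `ĵ`. -/
def projSum {X : Type*} {n : ℕ} (j : Fin n → X → (Fin n → ℝ))
    (S : Finset (Fin n)) (x : X) : Matrix (Fin n) (Fin n) ℝ :=
  ∑ i ∈ S, vecMulVec (j i x) (j i x)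

/-- `S` is a continuous minimum basis subset (CMBS) at `x₀`: `S` is nonempty, `P_S` is
continuous at `x₀`, and no nonempty proper subset `T ⊊ S` has `P_T` continuous at `x₀`. -/
def IsCMBS {X : Type*} [TopologicalSpace X] {n : ℕ}
    (j : Fin n → X → (Fin n → ℝ)) (x₀ : X) (S : Finset (Fin n)) : Prop :=
  S.Nonempty ∧ ContinuousAt (projSum j S) x₀ ∧
    ∀ T : Finset (Fin n), T.Nonempty → T ⊂ S → ¬ ContinuousAt (projSum j T) x₀

section Aux

variable {X : Type*} [NormedAddCommGroup X] [NormedSpace ℝ X]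
  {n : ℕ} {j : Fin n → X → (Fin n → ℝ)} {x₀ : X}

lemma vecMulVec_mul_vecMulVec' (u v w z : Fin n → ℝ) :
    vecMulVec u v * vecMulVec w z = (v ⬝ᵥ w) • vecMulVec u z := by
  ext a b
  simp only [Matrix.mul_apply, vecMulVec_apply, Matrix.smul_apply, smul_eq_mul, dotProduct]
  rw [Finset.sum_mul]
  exact Finset.sum_congr rfl fun c _ => by ring

omit [NormedAddCommGroup X] [NormedSpace ℝ X] in
lemma projSum_mul (horth : ∀ x, ∀ i k : Fin n, j i x ⬝ᵥ j k x = if i = k then 1 else 0)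
    (S T : Finset (Fin n)) (x : X) :
    projSum j S x * projSum j T x = projSum j (S ∩ T) x := by
  unfold projSum
  rw [Finset.sum_mul_sum]
  have h1 : ∀ i ∈ S, ∑ k ∈ T, vecMulVec (j i x) (j i x) * vecMulVec (j k x) (j k x)
      = if i ∈ T then vecMulVec (j i x) (j i x) else 0 := by
    intro i _
    have h2 : ∀ k ∈ T, vecMulVec (j i x) (j i x) * vecMulVec (j k x) (j k x)
        = if k = i then vecMulVec (j i x) (j i x) else 0 := by
      intro k _
      rw [vecMulVec_mul_vecMulVec', horth]
      by_cases h : i = k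
      · subst h; simp
      · simp [h, Ne.symm h]
    rw [Finset.sum_congr rfl h2, Finset.sum_ite_eq' T i]
  rw [Finset.sum_congr rfl h1, Finset.sum_ite_mem]

omit [NormedAddCommGroup X] [NormedSpace ℝ X] in
lemma projSum_univ (horth : ∀ x, ∀ i k : Fin n, j i x ⬝ᵥ j k x = if i = k then 1 else 0)
    (x : X) : projSum j Finset.univ x = 1 := by
  set M : Matrix (Fin n) (Fin n) ℝ := Matrix.of (fun i a => j i x a) with hM
  have hMMt : M * Mᵀ = 1 := by
    ext i k
    simpa [Matrix.mul_apply, Matrix.one_apply, dotProduct, hM] using horth x i k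
  have hMtM : Mᵀ * M = 1 := mul_eq_one_comm.mp hMMt
  ext a b
  have h := congrFun (congrFun hMtM a) b
  simp only [Matrix.mul_apply, Matrix.transpose_apply, hM, Matrix.of_apply] at h
  simpa [projSum, Matrix.sum_apply, vecMulVec_apply] using h

lemma contAt_inter (horth : ∀ x, ∀ i k : Fin n, j i x ⬝ᵥ j k x = if i = k then 1 else 0)
    {S T : Finset (Fin n)} (hS : ContinuousAt (projSum j S) x₀)
    (hT : ContinuousAt (projSum j T) x₀) :
    ContinuousAt (projSum j (S ∩ T)) x₀ := by
  have h : projSum j (S ∩ T) = fun x => projSum j S x * projSum j T x := by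
    funext x; rw [projSum_mul horth]
  rw [h]
  exact hS.mul hT

lemma contAt_sdiff (horth : ∀ x, ∀ i k : Fin n, j i x ⬝ᵥ j k x = if i = k then 1 else 0)
    {S T : Finset (Fin n)} (hS : ContinuousAt (projSum j S) x₀)
    (hT : ContinuousAt (projSum j T) x₀) :
    ContinuousAt (projSum j (S \ T)) x₀ := by
  have h : projSum j (S \ T) = fun x => projSum j S x - projSum j (S ∩ T) x := by
    funext x
    have hsum : projSum j (S \ T) x + projSum j (S ∩ T) x = projSum j S x := by
      unfold projSum
      rw [← Finset.sum_union (Finset.disjoint_sdiff_inter S T), Finset.sdiff_union_inter]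
    linear_combination (norm := module) hsum
  rw [h]
  exact hS.sub (contAt_inter horth hS hT)

lemma contAt_inf (horth : ∀ x, ∀ i k : Fin n, j i x ⬝ᵥ j k x = if i = k then 1 else 0)
    (F : Finset (Finset (Fin n))) (hF : ∀ S ∈ F, ContinuousAt (projSum j S) x₀) :
    ContinuousAt (projSum j (F.inf id)) x₀ := by
  induction F using Finset.induction_on with
  | empty =>
      simp only [Finset.inf_empty]
      have h : (⊤ : Finset (Fin n)) = Finset.univ := rfl
      rw [h]
      have h2 : projSum j Finset.univ = fun _ : X => (1 : Matrix (Fin n) (Fin n) ℝ) := by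
        funext x; exact projSum_univ horth x
      rw [h2]
      exact continuousAt_const
  | insert a F' hnotmem ih =>
      rw [Finset.inf_insert]
      have ha : ContinuousAt (projSum j a) x₀ := hF a (Finset.mem_insert_self a F')
      have hF' := ih (fun S hS => hF S (Finset.mem_insert_of_mem hS))
      have h : (a ⊓ F'.inf id) = a ∩ F'.inf id := rfl
      rw [id_eq] at *
      rw [h]
      exact contAt_inter horth ha hF'

end Aux

/-- The collection of all CMBSs at `x₀` is a partition of `{1,…,n}`: distinct CMBSs are
disjoint and every index belongs to some CMBS. -/
theorem cmbs_partition
    {X : Type*} [NormedAddCommGroup X] [NormedSpace ℝ X]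
    {n : ℕ} (j : Fin n → X → (Fin n → ℝ)) (x₀ : X)
    (horth : ∀ x, ∀ i k : Fin n, j i x ⬝ᵥ j k x = if i = k then 1 else 0) :
    (∀ S S' : Finset (Fin n), IsCMBS j x₀ S → IsCMBS j x₀ S' → S ≠ S' →
      Disjoint S S') ∧
    (∀ i : Fin n, ∃ S : Finset (Fin n), IsCMBS j x₀ S ∧ i ∈ S) := by
  constructor
  · intro S S' hS hS' hne
    by_contra hdisj
    obtain ⟨a, haS, haS'⟩ := Finset.not_disjoint_iff.mp hdisj
    have hmem : a ∈ S ∩ S' := Finset.mem_inter.mpr ⟨haS, haS'⟩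
    have hcont : ContinuousAt (projSum j (S ∩ S')) x₀ :=
      contAt_inter horth hS.2.1 hS'.2.1
    have hne' : (S ∩ S').Nonempty := ⟨a, hmem⟩
    have h1 : S ⊆ S' := by
      by_contra h
      exact hS.2.2 (S ∩ S') hne' (ssubset_of_subset_of_ne Finset.inter_subset_left
        (fun he => h (by rw [← he] at *; exact fun x hx => (Finset.mem_inter.mp
          (he ▸ hx)).2))) hcont
    have h2 : S' ⊆ S := by
      by_contra h
      exact hS'.2.2 (S ∩ S') hne' (ssubset_of_subset_of_ne Finset.inter_subset_right
        (fun he => h (fun x hx => (Finset.mem_inter.mp (he ▸ hx)).1))) hcont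
    exact hne (Finset.Subset.antisymm h1 h2)
  · intro i
    classical
    set F : Finset (Finset (Fin n)) :=
      Finset.univ.filter (fun S => ContinuousAt (projSum j S) x₀ ∧ i ∈ S) with hFdef
    set Si : Finset (Fin n) := F.inf id with hSi
    have hmemF : ∀ S, S ∈ F ↔ (ContinuousAt (projSum j S) x₀ ∧ i ∈ S) := by
      intro S; simp [hFdef]
    have hiSi : i ∈ Si := by
      rw [hSi]
      exact Finset.mem_inf.mpr (fun S hS => ((hmemF S).mp hS).2)
    have hcontSi : ContinuousAt (projSum j Si) x₀ :=
      contAt_inf horth F (fun S hS => ((hmemF S).mp hS).1)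
    have hmin : ∀ T : Finset (Fin n), T.Nonempty → T ⊂ Si →
        ¬ ContinuousAt (projSum j T) x₀ := by
      intro T hTne hTsub hTcont
      by_cases hiT : i ∈ T
      · -- T ∈ F, so Si ⊆ T, contradicting T ⊂ Si
        have : Si ≤ T := by
          rw [hSi]
          exact Finset.inf_le ((hmemF T).mpr ⟨hTcont, hiT⟩)
        exact hTsub.2 this
      · -- consider Si \ T
        have hcontU : ContinuousAt (projSum j (Si \ T)) x₀ :=
          contAt_sdiff horth hcontSi hTcont
        have hiU : i ∈ Si \ T := Finset.mem_sdiff.mpr ⟨hiSi, hiT⟩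
        have hle : Si ≤ Si \ T := by
          rw [hSi]
          exact Finset.inf_le ((hmemF (Si \ T)).mpr ⟨hcontU, hiU⟩)
        obtain ⟨t, ht⟩ := hTne
        have htSi : t ∈ Si := hTsub.1 ht
        have : t ∈ Si \ T := hle htSi
        exact (Finset.mem_sdiff.mp this).2 ht
    exact ⟨Si, ⟨⟨i, hiSi⟩, hcontSi, hmin⟩, hiSi⟩
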